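/- Let A be a quasitriangular bialgebra with coproduct Δ and R-matrix R. Consider the bialgebra A^{cop} ⊗ A with coproduct (2 3)∘(Δ^op ⊗ Δ) and R-matrix R_{31}·R_{24} ∈ (A^{cop}⊗A)^{⊗2}; it is quasitriangular, and Δ(A) ⊆ A^{cop} ⊗ A is a right coideal subalgebra. Moreover, the triple (ψ, J, K) = ((1 2), 1⊗1, R) — where (1 2) is the flip algebra automorphism of A^{cop} ⊗ A — is a cylindrical structure on (A^{cop} ⊗ A, Δ(A)): (i) ((1 2), 1⊗1) is a twist pair; (ii) R·Δ(x) = (1 2)(Δ(x))·R for all x ∈ A; (iii) the coproduct of K = R under (2 3)∘(Δ^op⊗Δ) equals (1⊗K)·R'^ψ·(K⊗1), where R'^ψ = ((1 2)⊗id)(R_{31}·R_{24}). -/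

import Mathlib

open TensorProduct

section Defs
variable (k A : Type*) [CommSemiring k] [Semiring A]

section Alg
variable [Algebra k A]

noncomputable def emb12 : A ⊗[k] A →ₐ[k] A ⊗[k] (A ⊗[k] A) :=
  Algebra.TensorProduct.map (AlgHom.id k A) Algebra.TensorProduct.includeLeft

noncomputable def emb13 : A ⊗[k] A →ₐ[k] A ⊗[k] (A ⊗[k] A) :=
  Algebra.TensorProduct.map (AlgHom.id k A) Algebra.TensorProduct.includeRight

noncomputable def emb23 : A ⊗[k] A →ₐ[k] A ⊗[k] (A ⊗[k] A) :=
  Algebra.TensorProduct.includeRight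

noncomputable def flip2 : A ⊗[k] A ≃ₐ[k] A ⊗[k] A := Algebra.TensorProduct.comm k A A

noncomputable def psiL (ψ : A ≃ₐ[k] A) : A ⊗[k] A →ₐ[k] A ⊗[k] A :=
  Algebra.TensorProduct.map ψ.toAlgHom (AlgHom.id k A)

noncomputable def psiR (ψ : A ≃ₐ[k] A) : A ⊗[k] A →ₐ[k] A ⊗[k] A :=
  Algebra.TensorProduct.map (AlgHom.id k A) ψ.toAlgHom

noncomputable def psiBoth (ψ : A ≃ₐ[k] A) : A ⊗[k] A →ₐ[k] A ⊗[k] A :=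
  Algebra.TensorProduct.map ψ.toAlgHom ψ.toAlgHom

noncomputable def sub2 (B : Subalgebra k A) : Submodule k (A ⊗[k] A) :=
  Submodule.span k {t : A ⊗[k] A | ∃ x ∈ B, ∃ y : A, t = x ⊗ₜ[k] y}

end Alg

variable [Bialgebra k A]

noncomputable def cop : A →ₐ[k] A ⊗[k] A := Bialgebra.comulAlgHom k A

noncomputable def copOp : A →ₐ[k] A ⊗[k] A := (flip2 k A).toAlgHom.comp (cop k A)

noncomputable def cou : A →ₐ[k] k := Bialgebra.counitAlgHom k A

noncomputable def copL : A ⊗[k] A →ₐ[k] A ⊗[k] (A ⊗[k] A) :=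
  (Algebra.TensorProduct.assoc k k k A A A).toAlgHom.comp
    (Algebra.TensorProduct.map (cop k A) (AlgHom.id k A))

noncomputable def copR : A ⊗[k] A →ₐ[k] A ⊗[k] (A ⊗[k] A) :=
  Algebra.TensorProduct.map (AlgHom.id k A) (cop k A)

noncomputable def couL : A ⊗[k] A →ₐ[k] A :=
  (Algebra.TensorProduct.lid k A).toAlgHom.comp
    (Algebra.TensorProduct.map (cou k A) (AlgHom.id k A))

noncomputable def couR : A ⊗[k] A →ₐ[k] A :=
  (Algebra.TensorProduct.rid k k A).toAlgHom.comp
    (Algebra.TensorProduct.map (AlgHom.id k A) (cou k A))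

structure QTriangular (R : A ⊗[k] A) : Prop where
  isUnit : IsUnit R
  intertwine : ∀ x : A, R * cop k A x = copOp k A x * R
  coproduct_left : copL k A R = emb13 k A R * emb23 k A R
  coproduct_right : copR k A R = emb13 k A R * emb12 k A R

end Defs

section Diagonal
variable (k A : Type*) [CommSemiring k] [Semiring A] [Bialgebra k A]

/-- the coproduct `(2 3) ∘ (Δ^op ⊗ Δ)` of the quasitriangular bialgebra `A^{cop} ⊗ A` -/
noncomputable def copD : A ⊗[k] A →ₗ[k] (A ⊗[k] A) ⊗[k] (A ⊗[k] A) :=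
  (TensorProduct.tensorTensorTensorComm k A A A A).toLinearMap ∘ₗ
    TensorProduct.map (copOp k A).toLinearMap (cop k A).toLinearMap

/-- the counit `ε ⊗ ε` of `A^{cop} ⊗ A` -/
noncomputable def couD : A ⊗[k] A →ₐ[k] k :=
  (Algebra.TensorProduct.lid k k).toAlgHom.comp
    (Algebra.TensorProduct.map (cou k A) (cou k A))

/-- placement of `A ⊗ A` into factors `(3,1)` of `(A ⊗ A) ⊗ (A ⊗ A)` -/
noncomputable def j31 : A ⊗[k] A →ₐ[k] (A ⊗[k] A) ⊗[k] (A ⊗[k] A) :=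
  (Algebra.TensorProduct.map Algebra.TensorProduct.includeLeft
    Algebra.TensorProduct.includeLeft).comp (flip2 k A).toAlgHom

/-- placement of `A ⊗ A` into factors `(2,4)` of `(A ⊗ A) ⊗ (A ⊗ A)` -/
noncomputable def j24 : A ⊗[k] A →ₐ[k] (A ⊗[k] A) ⊗[k] (A ⊗[k] A) :=
  Algebra.TensorProduct.map Algebra.TensorProduct.includeRight
    Algebra.TensorProduct.includeRight

/-- the R-matrix `R₃₁ · R₂₄` of `A^{cop} ⊗ A` -/
noncomputable def rD (R : A ⊗[k] A) : (A ⊗[k] A) ⊗[k] (A ⊗[k] A) :=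
  j31 k A R * j24 k A R

/-- `D ⊗ id` on `D ⊗ D` for a linear coproduct `D` on the algebra `A ⊗ A` -/
noncomputable def copDL :
    (A ⊗[k] A) ⊗[k] (A ⊗[k] A) →ₗ[k] (A ⊗[k] A) ⊗[k] ((A ⊗[k] A) ⊗[k] (A ⊗[k] A)) :=
  (TensorProduct.assoc k (A ⊗[k] A) (A ⊗[k] A) (A ⊗[k] A)).toLinearMap ∘ₗ
    TensorProduct.map (copD k A) LinearMap.id

/-- `id ⊗ D` on `D ⊗ D` -/
noncomputable def copDR :
    (A ⊗[k] A) ⊗[k] (A ⊗[k] A) →ₗ[k] (A ⊗[k] A) ⊗[k] ((A ⊗[k] A) ⊗[k] (A ⊗[k] A)) :=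
  TensorProduct.map LinearMap.id (copD k A)

/-- `(ε⊗ε) ⊗ id` on `D ⊗ D` -/
noncomputable def couDL : (A ⊗[k] A) ⊗[k] (A ⊗[k] A) →ₗ[k] A ⊗[k] A :=
  (TensorProduct.lid k (A ⊗[k] A)).toLinearMap ∘ₗ
    TensorProduct.map (couD k A).toLinearMap LinearMap.id

/-- `id ⊗ (ε⊗ε)` on `D ⊗ D` -/
noncomputable def couDR : (A ⊗[k] A) ⊗[k] (A ⊗[k] A) →ₗ[k] A ⊗[k] A :=
  (TensorProduct.rid k (A ⊗[k] A)).toLinearMap ∘ₗ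
    TensorProduct.map LinearMap.id (couD k A).toLinearMap

end Diagonal

section Aux
variable (k A : Type*) [CommSemiring k] [Semiring A] [Bialgebra k A]

open Algebra.TensorProduct

attribute [local simp] Algebra.TensorProduct.tmul_mul_tmul

@[simp] lemma flip2_tmul (a b : A) : flip2 k A (a ⊗ₜ[k] b) = b ⊗ₜ[k] a := rfl

@[simp] lemma j31_tmul (a b : A) :
    j31 k A (a ⊗ₜ[k] b) = (b ⊗ₜ[k] (1 : A)) ⊗ₜ[k] (a ⊗ₜ[k] (1 : A)) := by
  simp [j31]

@[simp] lemma j24_tmul (a b : A) :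
    j24 k A (a ⊗ₜ[k] b) = ((1 : A) ⊗ₜ[k] a) ⊗ₜ[k] ((1 : A) ⊗ₜ[k] b) := by
  simp [j24]

lemma copD_tmul (x y : A) :
    copD k A (x ⊗ₜ[k] y) = j31 k A (cop k A x) * j24 k A (cop k A y) := by
  have h : ∀ p q : A ⊗[k] A,
      TensorProduct.tensorTensorTensorComm k A A A A ((flip2 k A p) ⊗ₜ[k] q)
        = j31 k A p * j24 k A q := by
    intro p q
    induction p using TensorProduct.induction_on with
    | zero => simp [TensorProduct.zero_tmul]
    | tmul a b =>
      induction q using TensorProduct.induction_on with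
      | zero => simp [TensorProduct.tmul_zero]
      | tmul c d => simp
      | add q1 q2 h1 h2 => simp only [TensorProduct.tmul_add, map_add, mul_add, h1, h2]
    | add p1 p2 h1 h2 => simp only [map_add, TensorProduct.add_tmul, add_mul, h1, h2]
  simp only [copD, LinearMap.coe_comp, Function.comp_apply, TensorProduct.map_tmul,
    LinearEquiv.coe_coe, AlgHom.toLinearMap_apply]
  have : copOp k A x = flip2 k A (cop k A x) := rfl
  rw [this, h]

lemma C4 (u v : A ⊗[k] A) : Commute (j31 k A u) (j24 k A v) := by
  induction u using TensorProduct.induction_on with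
  | zero => simpa using Commute.zero_left _
  | tmul a b =>
    induction v using TensorProduct.induction_on with
    | zero => simpa using Commute.zero_right _
    | tmul c d =>
      unfold Commute SemiconjBy
      simp
    | add v1 v2 h1 h2 => simpa using h1.add_right h2
  | add u1 u2 h1 h2 => simpa using h1.add_left h2

end Aux
section Aux2
variable (k A : Type*) [CommSemiring k] [Semiring A] [Bialgebra k A]

open Algebra.TensorProduct

attribute [local simp] Algebra.TensorProduct.tmul_mul_tmul

lemma copD_one : copD k A 1 = 1 := by
  rw [Algebra.TensorProduct.one_def, copD_tmul]
  simp

lemma copD_mul (u v : A ⊗[k] A) : copD k A (u * v) = copD k A u * copD k A v := by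
  induction u using TensorProduct.induction_on with
  | zero => simp
  | tmul x y =>
    induction v using TensorProduct.induction_on with
    | zero => simp
    | tmul x' y' =>
      rw [Algebra.TensorProduct.tmul_mul_tmul, copD_tmul, copD_tmul, copD_tmul,
        map_mul, map_mul, map_mul, map_mul]
      exact ((C4 k A (cop k A x') (cop k A y)).symm.mul_mul_mul_comm _ _).symm
    | add v1 v2 h1 h2 => simp only [mul_add, map_add, h1, h2]
  | add u1 u2 h1 h2 => simp only [add_mul, map_add, h1, h2]

lemma flipF_j31 (u : A ⊗[k] A) :
    flip2 k (A ⊗[k] A) (j31 k A u) = j31 k A (flip2 k A u) := by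
  induction u using TensorProduct.induction_on with
  | zero => simp
  | tmul a b => simp [flip2]
  | add u1 u2 h1 h2 => simp only [map_add, h1, h2]

lemma flipF_j24 (u : A ⊗[k] A) :
    flip2 k (A ⊗[k] A) (j24 k A u) = j24 k A (flip2 k A u) := by
  induction u using TensorProduct.induction_on with
  | zero => simp
  | tmul a b => simp [flip2]
  | add u1 u2 h1 h2 => simp only [map_add, h1, h2]

lemma psiBoth_j31 (u : A ⊗[k] A) :
    psiBoth k (A ⊗[k] A) (flip2 k A) (j31 k A u) = j24 k A (flip2 k A u) := by
  induction u using TensorProduct.induction_on with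
  | zero => simp
  | tmul a b => simp [psiBoth, flip2]
  | add u1 u2 h1 h2 => simp only [map_add, h1, h2]

lemma psiBoth_j24 (u : A ⊗[k] A) :
    psiBoth k (A ⊗[k] A) (flip2 k A) (j24 k A u) = j31 k A (flip2 k A u) := by
  induction u using TensorProduct.induction_on with
  | zero => simp
  | tmul a b => simp [psiBoth, flip2]
  | add u1 u2 h1 h2 => simp only [map_add, h1, h2]

end Aux2
section Aux3
variable (k A : Type*) [CommSemiring k] [Semiring A] [Bialgebra k A]

open Algebra.TensorProduct

lemma flip2_flip2 (v : A ⊗[k] A) : flip2 k A (flip2 k A v) = v := by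
  induction v using TensorProduct.induction_on with
  | zero => simp
  | tmul a b => rfl
  | add v1 v2 h1 h2 => simp only [map_add, h1, h2]

lemma rD_intertwine (R : A ⊗[k] A) (hR : QTriangular k A R) (u : A ⊗[k] A) :
    rD k A R * copD k A u = flip2 k (A ⊗[k] A) (copD k A u) * rD k A R := by
  induction u using TensorProduct.induction_on with
  | zero => simp
  | tmul x y =>
    rw [copD_tmul, rD, map_mul, flipF_j31, flipF_j24]
    calc j31 k A R * j24 k A R * (j31 k A (cop k A x) * j24 k A (cop k A y))
        = j31 k A R * j31 k A (cop k A x) * (j24 k A R * j24 k A (cop k A y)) :=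
          ((C4 k A (cop k A x) R).symm.mul_mul_mul_comm _ _)
      _ = j31 k A (R * cop k A x) * j24 k A (R * cop k A y) := by rw [map_mul, map_mul]
      _ = j31 k A (copOp k A x * R) * j24 k A (copOp k A y * R) := by
          rw [hR.intertwine, hR.intertwine]
      _ = j31 k A (copOp k A x) * j31 k A R * (j24 k A (copOp k A y) * j24 k A R) := by
          rw [map_mul, map_mul]
      _ = j31 k A (copOp k A x) * j24 k A (copOp k A y) * (j31 k A R * j24 k A R) :=
          ((C4 k A R (copOp k A y)).mul_mul_mul_comm _ _)
      _ = j31 k A (flip2 k A (cop k A x)) * j24 k A (flip2 k A (cop k A y)) *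
            (j31 k A R * j24 k A R) := rfl
  | add u1 u2 h1 h2 => simp only [map_add, mul_add, add_mul, h1, h2]

lemma psiBoth_flipF_copD (u : A ⊗[k] A) :
    psiBoth k (A ⊗[k] A) (flip2 k A) (flip2 k (A ⊗[k] A) (copD k A ((flip2 k A).symm u)))
      = copD k A u := by
  have gen : ∀ w : A ⊗[k] A,
      psiBoth k (A ⊗[k] A) (flip2 k A) (flip2 k (A ⊗[k] A) (copD k A w))
        = copD k A (flip2 k A w) := by
    intro w
    induction w using TensorProduct.induction_on with
    | zero => simp
    | tmul x y =>
      rw [copD_tmul, map_mul, flipF_j31, flipF_j24, map_mul, psiBoth_j31, psiBoth_j24,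
        flip2_flip2, flip2_flip2]
      rw [show flip2 k A (x ⊗ₜ[k] y) = y ⊗ₜ[k] x from rfl, copD_tmul]
      exact ((C4 k A (cop k A y) (cop k A x)).eq).symm
    | add w1 w2 h1 h2 => simp only [map_add, h1, h2]
  have := gen ((flip2 k A).symm u)
  rwa [AlgEquiv.apply_symm_apply] at this

lemma psiBoth_flipF_rD (R : A ⊗[k] A) :
    psiBoth k (A ⊗[k] A) (flip2 k A) (flip2 k (A ⊗[k] A) (rD k A R)) = rD k A R := by
  rw [rD, map_mul, flipF_j31, flipF_j24, map_mul, psiBoth_j31, psiBoth_j24, flip2_flip2]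
  exact ((C4 k A R R).eq).symm

end Aux3
section CommuteHelpers
variable {k : Type*} [CommSemiring k]
variable {B C B' C' S : Type*} [Semiring B] [Semiring C] [Semiring B'] [Semiring C']
  [Semiring S] [Algebra k B] [Algebra k C] [Algebra k B'] [Algebra k C'] [Algebra k S]

lemma commute_lift_right (g : B →ₐ[k] S) (h : C →ₐ[k] S)
    (hgh : ∀ x y, Commute (g x) (h y)) (s : S)
    (hg : ∀ b, Commute s (g b)) (hh : ∀ c, Commute s (h c)) (y : B ⊗[k] C) :
    Commute s (Algebra.TensorProduct.lift g h hgh y) := by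
  induction y using TensorProduct.induction_on with
  | zero => simpa using Commute.zero_right s
  | tmul b c =>
    simpa [Algebra.TensorProduct.lift_tmul] using ((hg b).mul_right (hh c))
  | add u v hu hv => simpa using hu.add_right hv

lemma lift_commute_lift (f : B →ₐ[k] S) (g : C →ₐ[k] S) (hfg : ∀ x y, Commute (f x) (g y))
    (f' : B' →ₐ[k] S) (g' : C' →ₐ[k] S) (hfg' : ∀ x y, Commute (f' x) (g' y))
    (h1 : ∀ x y, Commute (f x) (f' y)) (h2 : ∀ x y, Commute (f x) (g' y))
    (h3 : ∀ x y, Commute (g x) (f' y)) (h4 : ∀ x y, Commute (g x) (g' y))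
    (u : B ⊗[k] C) (v : B' ⊗[k] C') :
    Commute (Algebra.TensorProduct.lift f g hfg u)
      (Algebra.TensorProduct.lift f' g' hfg' v) := by
  induction u using TensorProduct.induction_on with
  | zero => simpa using Commute.zero_left _
  | tmul b c =>
    rw [Algebra.TensorProduct.lift_tmul]
    exact (commute_lift_right f' g' hfg' (f b) (h1 b) (h2 b) v).mul_left
      (commute_lift_right f' g' hfg' (g c) (h3 c) (h4 c) v)
  | add u1 u2 p1 p2 => simpa using p1.add_left p2
end CommuteHelpers

section Placements
variable (k A : Type*) [CommSemiring k] [Semiring A] [Bialgebra k A]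

open Algebra.TensorProduct

-- single-leg embeddings into the fourfold tensor (A⊗A)⊗(A⊗A)
noncomputable def eF1 : A →ₐ[k] (A ⊗[k] A) ⊗[k] (A ⊗[k] A) :=
  (includeLeft : (A ⊗[k] A) →ₐ[k] (A ⊗[k] A) ⊗[k] (A ⊗[k] A)).comp
    (includeLeft : A →ₐ[k] A ⊗[k] A)
noncomputable def eF2 : A →ₐ[k] (A ⊗[k] A) ⊗[k] (A ⊗[k] A) :=
  (includeLeft : (A ⊗[k] A) →ₐ[k] (A ⊗[k] A) ⊗[k] (A ⊗[k] A)).comp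
    (includeRight : A →ₐ[k] A ⊗[k] A)
noncomputable def eF3 : A →ₐ[k] (A ⊗[k] A) ⊗[k] (A ⊗[k] A) :=
  (includeRight : (A ⊗[k] A) →ₐ[k] (A ⊗[k] A) ⊗[k] (A ⊗[k] A)).comp
    (includeLeft : A →ₐ[k] A ⊗[k] A)
noncomputable def eF4 : A →ₐ[k] (A ⊗[k] A) ⊗[k] (A ⊗[k] A) :=
  (includeRight : (A ⊗[k] A) →ₐ[k] (A ⊗[k] A) ⊗[k] (A ⊗[k] A)).comp
    (includeRight : A →ₐ[k] A ⊗[k] A)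

@[simp] lemma eF1_apply (a : A) :
    eF1 k A a = (a ⊗ₜ[k] (1:A)) ⊗ₜ[k] ((1:A) ⊗ₜ[k] (1:A)) := rfl
@[simp] lemma eF2_apply (a : A) :
    eF2 k A a = ((1:A) ⊗ₜ[k] a) ⊗ₜ[k] ((1:A) ⊗ₜ[k] (1:A)) := rfl
@[simp] lemma eF3_apply (a : A) :
    eF3 k A a = ((1:A) ⊗ₜ[k] (1:A)) ⊗ₜ[k] (a ⊗ₜ[k] (1:A)) := rfl
@[simp] lemma eF4_apply (a : A) :
    eF4 k A a = ((1:A) ⊗ₜ[k] (1:A)) ⊗ₜ[k] ((1:A) ⊗ₜ[k] a) := rfl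

attribute [local simp] Algebra.TensorProduct.tmul_mul_tmul

lemma ceF12 (a b : A) : Commute (eF1 k A a) (eF2 k A b) := by unfold Commute SemiconjBy; simp
lemma ceF13 (a b : A) : Commute (eF1 k A a) (eF3 k A b) := by unfold Commute SemiconjBy; simp
lemma ceF14 (a b : A) : Commute (eF1 k A a) (eF4 k A b) := by unfold Commute SemiconjBy; simp
lemma ceF23 (a b : A) : Commute (eF2 k A a) (eF3 k A b) := by unfold Commute SemiconjBy; simp
lemma ceF24 (a b : A) : Commute (eF2 k A a) (eF4 k A b) := by unfold Commute SemiconjBy; simp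
lemma ceF34 (a b : A) : Commute (eF3 k A a) (eF4 k A b) := by unfold Commute SemiconjBy; simp

-- two-leg placements into the fourfold tensor
noncomputable def gp12 : A ⊗[k] A →ₐ[k] (A ⊗[k] A) ⊗[k] (A ⊗[k] A) :=
  Algebra.TensorProduct.lift (eF1 k A) (eF2 k A) (ceF12 k A)
noncomputable def gp14 : A ⊗[k] A →ₐ[k] (A ⊗[k] A) ⊗[k] (A ⊗[k] A) :=
  Algebra.TensorProduct.lift (eF1 k A) (eF4 k A) (ceF14 k A)
noncomputable def gp32 : A ⊗[k] A →ₐ[k] (A ⊗[k] A) ⊗[k] (A ⊗[k] A) :=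
  Algebra.TensorProduct.lift (eF3 k A) (eF2 k A) (fun a b => (ceF23 k A b a).symm)
noncomputable def gp34 : A ⊗[k] A →ₐ[k] (A ⊗[k] A) ⊗[k] (A ⊗[k] A) :=
  Algebra.TensorProduct.lift (eF3 k A) (eF4 k A) (ceF34 k A)

-- three-leg placements (legs (3,1,4) and (3,1,2)) from A ⊗ (A ⊗ A)
noncomputable def np314 : A ⊗[k] (A ⊗[k] A) →ₐ[k] (A ⊗[k] A) ⊗[k] (A ⊗[k] A) :=
  Algebra.TensorProduct.lift (eF3 k A)
    (Algebra.TensorProduct.lift (eF1 k A) (eF4 k A) (ceF14 k A))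
    (fun a y => commute_lift_right _ _ _ _ (fun b => (ceF13 k A b a).symm)
      (fun c => ceF34 k A a c) y)
noncomputable def np312 : A ⊗[k] (A ⊗[k] A) →ₐ[k] (A ⊗[k] A) ⊗[k] (A ⊗[k] A) :=
  Algebra.TensorProduct.lift (eF3 k A)
    (Algebra.TensorProduct.lift (eF1 k A) (eF2 k A) (ceF12 k A))
    (fun a y => commute_lift_right _ _ _ _ (fun b => (ceF13 k A b a).symm)
      (fun c => (ceF23 k A c a).symm) y)

lemma cgp32_14 (u v : A ⊗[k] A) : Commute (gp32 k A u) (gp14 k A v) :=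
  lift_commute_lift _ _ _ _ _ _
    (fun a b => (ceF13 k A b a).symm) (fun a b => ceF34 k A a b)
    (fun a b => (ceF12 k A b a).symm) (fun a b => ceF24 k A a b) u v

end Placements
section Aux5
variable (k A : Type*) [CommSemiring k] [Semiring A] [Bialgebra k A]

open Algebra.TensorProduct

attribute [local simp] Algebra.TensorProduct.tmul_mul_tmul Algebra.TensorProduct.assoc_tmul
  Algebra.TensorProduct.lift_tmul

noncomputable def lamF : (A ⊗[k] A) ⊗[k] (A ⊗[k] A) →ₐ[k] (A ⊗[k] A) ⊗[k] (A ⊗[k] A) :=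
  Algebra.TensorProduct.lift (j31 k A) (j24 k A) (C4 k A)

noncomputable def mcop : A ⊗[k] (A ⊗[k] A) →ₐ[k] (A ⊗[k] A) ⊗[k] (A ⊗[k] A) :=
  Algebra.TensorProduct.map (cop k A) (AlgHom.id k (A ⊗[k] A))

lemma copD_eq_lam (u : A ⊗[k] A) : copD k A u = lamF k A (mcop k A (copR k A u)) := by
  induction u using TensorProduct.induction_on with
  | zero => simp
  | tmul x y => rw [copD_tmul]; simp [copR, mcop, lamF]
  | add u1 u2 h1 h2 => simp only [map_add, h1, h2]

lemma SF1 (w : A ⊗[k] A) (b : A) :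
    j31 k A w * j24 k A ((1:A) ⊗ₜ[k] b)
      = np314 k A (Algebra.TensorProduct.assoc k k k A A A (w ⊗ₜ[k] b)) := by
  induction w using TensorProduct.induction_on with
  | zero => simp [TensorProduct.zero_tmul]
  | tmul e f => simp [np314]
  | add w1 w2 h1 h2 => simp only [map_add, add_mul, TensorProduct.add_tmul, h1, h2]

lemma SF2 (w : A ⊗[k] A) (b : A) :
    j31 k A w * j24 k A (b ⊗ₜ[k] (1:A))
      = np312 k A (Algebra.TensorProduct.assoc k k k A A A (w ⊗ₜ[k] b)) := by
  induction w using TensorProduct.induction_on with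
  | zero => simp [TensorProduct.zero_tmul]
  | tmul e f => simp [np312]
  | add w1 w2 h1 h2 => simp only [map_add, add_mul, TensorProduct.add_tmul, h1, h2]

lemma F1 (u : A ⊗[k] A) :
    lamF k A (mcop k A (emb13 k A u)) = np314 k A (copL k A u) := by
  induction u using TensorProduct.induction_on with
  | zero => simp
  | tmul a b =>
    have h13 : emb13 k A (a ⊗ₜ[k] b) = a ⊗ₜ[k] ((1:A) ⊗ₜ[k] b) := by simp [emb13]
    have hL : copL k A (a ⊗ₜ[k] b)
        = Algebra.TensorProduct.assoc k k k A A A (cop k A a ⊗ₜ[k] b) := by simp [copL]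
    rw [h13, hL, ← SF1]
    simp [mcop, lamF]
  | add u1 u2 h1 h2 => simp only [map_add, h1, h2]

lemma F2 (u : A ⊗[k] A) :
    lamF k A (mcop k A (emb12 k A u)) = np312 k A (copL k A u) := by
  induction u using TensorProduct.induction_on with
  | zero => simp
  | tmul a b =>
    have h12 : emb12 k A (a ⊗ₜ[k] b) = a ⊗ₜ[k] (b ⊗ₜ[k] (1:A)) := by simp [emb12]
    have hL : copL k A (a ⊗ₜ[k] b)
        = Algebra.TensorProduct.assoc k k k A A A (cop k A a ⊗ₜ[k] b) := by simp [copL]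
    rw [h12, hL, ← SF2]
    simp [mcop, lamF]
  | add u1 u2 h1 h2 => simp only [map_add, h1, h2]

lemma NF13 (u : A ⊗[k] A) : np314 k A (emb13 k A u) = gp34 k A u := by
  induction u using TensorProduct.induction_on with
  | zero => simp
  | tmul a b => simp [emb13, np314, gp34]
  | add u1 u2 h1 h2 => simp only [map_add, h1, h2]

lemma NF23 (u : A ⊗[k] A) : np314 k A (emb23 k A u) = gp14 k A u := by
  induction u using TensorProduct.induction_on with
  | zero => simp
  | tmul a b => simp [emb23, np314, gp14]
  | add u1 u2 h1 h2 => simp only [map_add, h1, h2]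

lemma NG13 (u : A ⊗[k] A) : np312 k A (emb13 k A u) = gp32 k A u := by
  induction u using TensorProduct.induction_on with
  | zero => simp
  | tmul a b => simp [emb13, np312, gp32]
  | add u1 u2 h1 h2 => simp only [map_add, h1, h2]

lemma NG23 (u : A ⊗[k] A) : np312 k A (emb23 k A u) = gp12 k A u := by
  induction u using TensorProduct.induction_on with
  | zero => simp
  | tmul a b => simp [emb23, np312, gp12]
  | add u1 u2 h1 h2 => simp only [map_add, h1, h2]

lemma g34_app (u : A ⊗[k] A) : gp34 k A u = (1 : A ⊗[k] A) ⊗ₜ[k] u := by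
  induction u using TensorProduct.induction_on with
  | zero => simp
  | tmul a b => simp [gp34, Algebra.TensorProduct.one_def]
  | add u1 u2 h1 h2 => simp only [map_add, TensorProduct.tmul_add, h1, h2]

lemma g12_app (u : A ⊗[k] A) : gp12 k A u = u ⊗ₜ[k] (1 : A ⊗[k] A) := by
  induction u using TensorProduct.induction_on with
  | zero => simp
  | tmul a b => simp [gp12, Algebra.TensorProduct.one_def]
  | add u1 u2 h1 h2 => simp only [map_add, TensorProduct.add_tmul, h1, h2]

lemma psiL_j31 (u : A ⊗[k] A) :
    psiL k (A ⊗[k] A) (flip2 k A) (j31 k A u) = gp32 k A u := by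
  induction u using TensorProduct.induction_on with
  | zero => simp
  | tmul a b => simp [psiL, gp32, flip2]
  | add u1 u2 h1 h2 => simp only [map_add, h1, h2]

lemma psiL_j24 (u : A ⊗[k] A) :
    psiL k (A ⊗[k] A) (flip2 k A) (j24 k A u) = gp14 k A u := by
  induction u using TensorProduct.induction_on with
  | zero => simp
  | tmul a b => simp [psiL, gp14, flip2]
  | add u1 u2 h1 h2 => simp only [map_add, h1, h2]

lemma thm_iii (R : A ⊗[k] A) (hR : QTriangular k A R) :
    copD k A R =
      ((1 : A ⊗[k] A) ⊗ₜ[k] R) * psiL k (A ⊗[k] A) (flip2 k A) (rD k A R) *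
        (R ⊗ₜ[k] (1 : A ⊗[k] A)) := by
  rw [copD_eq_lam, hR.coproduct_right]
  simp only [map_mul]
  rw [F1, F2, hR.coproduct_left]
  simp only [map_mul]
  rw [NF13, NF23, NG13, NG23, rD]
  simp only [map_mul]
  rw [psiL_j31, psiL_j24, ← g34_app, ← g12_app]
  simp only [mul_assoc]
  rw [(cgp32_14 k A R R).symm.left_comm]

end Aux5
section Aux6
variable (k A : Type*) [CommSemiring k] [Semiring A] [Bialgebra k A]

open Algebra.TensorProduct

attribute [local simp] Algebra.TensorProduct.tmul_mul_tmul Algebra.TensorProduct.assoc_tmul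
  Algebra.TensorProduct.lift_tmul

-- single-leg embeddings into the sixfold tensor (A⊗A)⊗((A⊗A)⊗(A⊗A))
noncomputable def mS1 : A →ₐ[k] (A ⊗[k] A) ⊗[k] ((A ⊗[k] A) ⊗[k] (A ⊗[k] A)) :=
  (includeLeft : (A ⊗[k] A) →ₐ[k] _).comp (includeLeft : A →ₐ[k] A ⊗[k] A)
noncomputable def mS2 : A →ₐ[k] (A ⊗[k] A) ⊗[k] ((A ⊗[k] A) ⊗[k] (A ⊗[k] A)) :=
  (includeLeft : (A ⊗[k] A) →ₐ[k] _).comp (includeRight : A →ₐ[k] A ⊗[k] A)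
noncomputable def mS3 : A →ₐ[k] (A ⊗[k] A) ⊗[k] ((A ⊗[k] A) ⊗[k] (A ⊗[k] A)) :=
  (includeRight : ((A ⊗[k] A) ⊗[k] (A ⊗[k] A)) →ₐ[k] _).comp
    ((includeLeft : (A ⊗[k] A) →ₐ[k] (A ⊗[k] A) ⊗[k] (A ⊗[k] A)).comp
      (includeLeft : A →ₐ[k] A ⊗[k] A))
noncomputable def mS4 : A →ₐ[k] (A ⊗[k] A) ⊗[k] ((A ⊗[k] A) ⊗[k] (A ⊗[k] A)) :=
  (includeRight : ((A ⊗[k] A) ⊗[k] (A ⊗[k] A)) →ₐ[k] _).comp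
    ((includeLeft : (A ⊗[k] A) →ₐ[k] (A ⊗[k] A) ⊗[k] (A ⊗[k] A)).comp
      (includeRight : A →ₐ[k] A ⊗[k] A))
noncomputable def mS5 : A →ₐ[k] (A ⊗[k] A) ⊗[k] ((A ⊗[k] A) ⊗[k] (A ⊗[k] A)) :=
  (includeRight : ((A ⊗[k] A) ⊗[k] (A ⊗[k] A)) →ₐ[k] _).comp
    ((includeRight : (A ⊗[k] A) →ₐ[k] (A ⊗[k] A) ⊗[k] (A ⊗[k] A)).comp
      (includeLeft : A →ₐ[k] A ⊗[k] A))
noncomputable def mS6 : A →ₐ[k] (A ⊗[k] A) ⊗[k] ((A ⊗[k] A) ⊗[k] (A ⊗[k] A)) :=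
  (includeRight : ((A ⊗[k] A) ⊗[k] (A ⊗[k] A)) →ₐ[k] _).comp
    ((includeRight : (A ⊗[k] A) →ₐ[k] (A ⊗[k] A) ⊗[k] (A ⊗[k] A)).comp
      (includeRight : A →ₐ[k] A ⊗[k] A))

@[simp] lemma mS1_apply (a : A) : mS1 k A a =
    (a ⊗ₜ[k] (1:A)) ⊗ₜ[k] (((1:A) ⊗ₜ[k] (1:A)) ⊗ₜ[k] ((1:A) ⊗ₜ[k] (1:A))) := rfl
@[simp] lemma mS2_apply (a : A) : mS2 k A a =
    ((1:A) ⊗ₜ[k] a) ⊗ₜ[k] (((1:A) ⊗ₜ[k] (1:A)) ⊗ₜ[k] ((1:A) ⊗ₜ[k] (1:A))) := rfl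
@[simp] lemma mS3_apply (a : A) : mS3 k A a =
    ((1:A) ⊗ₜ[k] (1:A)) ⊗ₜ[k] ((a ⊗ₜ[k] (1:A)) ⊗ₜ[k] ((1:A) ⊗ₜ[k] (1:A))) := rfl
@[simp] lemma mS4_apply (a : A) : mS4 k A a =
    ((1:A) ⊗ₜ[k] (1:A)) ⊗ₜ[k] (((1:A) ⊗ₜ[k] a) ⊗ₜ[k] ((1:A) ⊗ₜ[k] (1:A))) := rfl
@[simp] lemma mS5_apply (a : A) : mS5 k A a =
    ((1:A) ⊗ₜ[k] (1:A)) ⊗ₜ[k] (((1:A) ⊗ₜ[k] (1:A)) ⊗ₜ[k] (a ⊗ₜ[k] (1:A))) := rfl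
@[simp] lemma mS6_apply (a : A) : mS6 k A a =
    ((1:A) ⊗ₜ[k] (1:A)) ⊗ₜ[k] (((1:A) ⊗ₜ[k] (1:A)) ⊗ₜ[k] ((1:A) ⊗ₜ[k] a)) := rfl

lemma cm51 (a b : A) : Commute (mS5 k A a) (mS1 k A b) := by unfold Commute SemiconjBy; simp
lemma cm53 (a b : A) : Commute (mS5 k A a) (mS3 k A b) := by unfold Commute SemiconjBy; simp
lemma cm31 (a b : A) : Commute (mS3 k A a) (mS1 k A b) := by unfold Commute SemiconjBy; simp
lemma cm24 (a b : A) : Commute (mS2 k A a) (mS4 k A b) := by unfold Commute SemiconjBy; simp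
lemma cm26 (a b : A) : Commute (mS2 k A a) (mS6 k A b) := by unfold Commute SemiconjBy; simp
lemma cm46 (a b : A) : Commute (mS4 k A a) (mS6 k A b) := by unfold Commute SemiconjBy; simp
lemma cm25 (a b : A) : Commute (mS2 k A a) (mS5 k A b) := by unfold Commute SemiconjBy; simp
lemma cm23 (a b : A) : Commute (mS2 k A a) (mS3 k A b) := by unfold Commute SemiconjBy; simp
lemma cm65 (a b : A) : Commute (mS6 k A a) (mS5 k A b) := by unfold Commute SemiconjBy; simp
lemma cm63 (a b : A) : Commute (mS6 k A a) (mS3 k A b) := by unfold Commute SemiconjBy; simp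
lemma cm21 (a b : A) : Commute (mS2 k A a) (mS1 k A b) := by unfold Commute SemiconjBy; simp
lemma cm61 (a b : A) : Commute (mS6 k A a) (mS1 k A b) := by unfold Commute SemiconjBy; simp

noncomputable def kp51 := Algebra.TensorProduct.lift (mS5 k A) (mS1 k A) (cm51 k A)
noncomputable def kp53 := Algebra.TensorProduct.lift (mS5 k A) (mS3 k A) (cm53 k A)
noncomputable def kp31 := Algebra.TensorProduct.lift (mS3 k A) (mS1 k A) (cm31 k A)
noncomputable def kp26 := Algebra.TensorProduct.lift (mS2 k A) (mS6 k A) (cm26 k A)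
noncomputable def kp46 := Algebra.TensorProduct.lift (mS4 k A) (mS6 k A) (cm46 k A)
noncomputable def kp24 := Algebra.TensorProduct.lift (mS2 k A) (mS4 k A) (cm24 k A)

noncomputable def kp531 : A ⊗[k] (A ⊗[k] A) →ₐ[k]
    (A ⊗[k] A) ⊗[k] ((A ⊗[k] A) ⊗[k] (A ⊗[k] A)) :=
  Algebra.TensorProduct.lift (mS5 k A)
    (Algebra.TensorProduct.lift (mS3 k A) (mS1 k A) (cm31 k A))
    (fun a y => commute_lift_right _ _ _ _ (fun b => cm53 k A a b) (fun c => cm51 k A a c) y)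

noncomputable def kp246 : A ⊗[k] (A ⊗[k] A) →ₐ[k]
    (A ⊗[k] A) ⊗[k] ((A ⊗[k] A) ⊗[k] (A ⊗[k] A)) :=
  Algebra.TensorProduct.lift (mS2 k A)
    (Algebra.TensorProduct.lift (mS4 k A) (mS6 k A) (cm46 k A))
    (fun a y => commute_lift_right _ _ _ _ (fun b => cm24 k A a b) (fun c => cm26 k A a c) y)

lemma ckp26_53 (u v : A ⊗[k] A) : Commute (kp26 k A u) (kp53 k A v) :=
  lift_commute_lift _ _ _ _ _ _
    (fun a b => cm25 k A a b) (fun a b => cm23 k A a b)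
    (fun a b => cm65 k A a b) (fun a b => cm63 k A a b) u v

lemma ckp26_31 (u v : A ⊗[k] A) : Commute (kp26 k A u) (kp31 k A v) :=
  lift_commute_lift _ _ _ _ _ _
    (fun a b => cm23 k A a b) (fun a b => cm21 k A a b)
    (fun a b => cm63 k A a b) (fun a b => cm61 k A a b) u v

lemma six_zero_mul (x : (A ⊗[k] A) ⊗[k] ((A ⊗[k] A) ⊗[k] (A ⊗[k] A))) : 0 * x = 0 := by exact zero_mul x
lemma six_mul_zero (x : (A ⊗[k] A) ⊗[k] ((A ⊗[k] A) ⊗[k] (A ⊗[k] A))) : x * 0 = 0 := by exact mul_zero x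
lemma six_mul_add (x y z : (A ⊗[k] A) ⊗[k] ((A ⊗[k] A) ⊗[k] (A ⊗[k] A))) :
    x * (y + z) = x * y + x * z := by exact NonUnitalNonAssocSemiring.left_distrib x y z
lemma six_add_mul (x y z : (A ⊗[k] A) ⊗[k] ((A ⊗[k] A) ⊗[k] (A ⊗[k] A))) :
    (x + y) * z = x * z + y * z := by exact NonUnitalNonAssocSemiring.right_distrib x y z
lemma six_mul_assoc (x y z : (A ⊗[k] A) ⊗[k] ((A ⊗[k] A) ⊗[k] (A ⊗[k] A))) :
    x * y * z = x * (y * z) := by exact mul_assoc x y z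

lemma six_left_comm {x y : (A ⊗[k] A) ⊗[k] ((A ⊗[k] A) ⊗[k] (A ⊗[k] A))} (h : Commute x y)
    (z : (A ⊗[k] A) ⊗[k] ((A ⊗[k] A) ⊗[k] (A ⊗[k] A))) : x * (y * z) = y * (x * z) := by
  rw [← six_mul_assoc, ← six_mul_assoc]
  exact congrArg (· * z) h.eq

end Aux6
section Aux7
variable (k A : Type*) [CommSemiring k] [Semiring A] [Bialgebra k A]

open Algebra.TensorProduct

attribute [local simp] Algebra.TensorProduct.tmul_mul_tmul Algebra.TensorProduct.assoc_tmul
  Algebra.TensorProduct.lift_tmul Algebra.TensorProduct.one_def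
  six_zero_mul six_mul_zero six_mul_add six_add_mul

lemma e531_13 (u : A ⊗[k] A) : kp531 k A (emb13 k A u) = kp51 k A u := by
  induction u using TensorProduct.induction_on with
  | zero => simp
  | tmul a b => simp [emb13, kp531, kp51]
  | add u1 u2 h1 h2 => simp only [map_add, h1, h2]

lemma e531_12 (u : A ⊗[k] A) : kp531 k A (emb12 k A u) = kp53 k A u := by
  induction u using TensorProduct.induction_on with
  | zero => simp
  | tmul a b => simp [emb12, kp531, kp53]
  | add u1 u2 h1 h2 => simp only [map_add, h1, h2]

lemma e531_23 (u : A ⊗[k] A) : kp531 k A (emb23 k A u) = kp31 k A u := by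
  induction u using TensorProduct.induction_on with
  | zero => simp
  | tmul a b => simp [emb23, kp531, kp31]
  | add u1 u2 h1 h2 => simp only [map_add, h1, h2]

lemma e246_13 (u : A ⊗[k] A) : kp246 k A (emb13 k A u) = kp26 k A u := by
  induction u using TensorProduct.induction_on with
  | zero => simp
  | tmul a b => simp [emb13, kp246, kp26]
  | add u1 u2 h1 h2 => simp only [map_add, h1, h2]

lemma e246_23 (u : A ⊗[k] A) : kp246 k A (emb23 k A u) = kp46 k A u := by
  induction u using TensorProduct.induction_on with
  | zero => simp
  | tmul a b => simp [emb23, kp246, kp46]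
  | add u1 u2 h1 h2 => simp only [map_add, h1, h2]

lemma e246_12 (u : A ⊗[k] A) : kp246 k A (emb12 k A u) = kp24 k A u := by
  induction u using TensorProduct.induction_on with
  | zero => simp
  | tmul a b => simp [emb12, kp246, kp24]
  | add u1 u2 h1 h2 => simp only [map_add, h1, h2]

lemma eS7 (u : A ⊗[k] A) : emb13 k (A ⊗[k] A) (j31 k A u) = kp51 k A u := by
  induction u using TensorProduct.induction_on with
  | zero => simp
  | tmul a b => simp [emb13, kp51]
  | add u1 u2 h1 h2 => simp only [map_add, h1, h2]

lemma eS8 (u : A ⊗[k] A) : emb13 k (A ⊗[k] A) (j24 k A u) = kp26 k A u := by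
  induction u using TensorProduct.induction_on with
  | zero => simp
  | tmul a b => simp [emb13, kp26]
  | add u1 u2 h1 h2 => simp only [map_add, h1, h2]

lemma eS9 (u : A ⊗[k] A) : emb23 k (A ⊗[k] A) (j31 k A u) = kp53 k A u := by
  induction u using TensorProduct.induction_on with
  | zero => simp
  | tmul a b => simp [emb23, kp53]
  | add u1 u2 h1 h2 => simp only [map_add, h1, h2]

lemma eS10 (u : A ⊗[k] A) : emb23 k (A ⊗[k] A) (j24 k A u) = kp46 k A u := by
  induction u using TensorProduct.induction_on with
  | zero => simp
  | tmul a b => simp [emb23, kp46]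
  | add u1 u2 h1 h2 => simp only [map_add, h1, h2]

lemma eS11 (u : A ⊗[k] A) : emb12 k (A ⊗[k] A) (j31 k A u) = kp31 k A u := by
  induction u using TensorProduct.induction_on with
  | zero => simp
  | tmul a b => simp [emb12, kp31]
  | add u1 u2 h1 h2 => simp only [map_add, h1, h2]

lemma eS12 (u : A ⊗[k] A) : emb12 k (A ⊗[k] A) (j24 k A u) = kp24 k A u := by
  induction u using TensorProduct.induction_on with
  | zero => simp
  | tmul a b => simp [emb12, kp24]
  | add u1 u2 h1 h2 => simp only [map_add, h1, h2]

lemma S1L (a d : A) (u v : A ⊗[k] A) :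
    TensorProduct.assoc k (A ⊗[k] A) (A ⊗[k] A) (A ⊗[k] A)
        ((j31 k A u * j24 k A v) ⊗ₜ[k] (a ⊗ₜ[k] d))
      = kp531 k A (a ⊗ₜ[k] u) * kp246 k A (Algebra.TensorProduct.assoc k k k A A A (v ⊗ₜ[k] d)) := by
  induction u using TensorProduct.induction_on with
  | zero => simp [TensorProduct.zero_tmul, TensorProduct.tmul_zero]
  | tmul e f =>
    induction v using TensorProduct.induction_on with
    | zero => simp [TensorProduct.zero_tmul, TensorProduct.tmul_zero]
    | tmul g h => simp [kp531, kp246, TensorProduct.assoc_tmul]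
    | add v1 v2 h1 h2 =>
      simp only [map_add, mul_add, add_mul, six_mul_add, six_add_mul, TensorProduct.add_tmul, h1, h2]
  | add u1 u2 h1 h2 =>
    simp only [map_add, mul_add, add_mul, six_mul_add, six_add_mul, TensorProduct.add_tmul, TensorProduct.tmul_add, h1, h2]

lemma S2L (b c : A) (u v : A ⊗[k] A) :
    (b ⊗ₜ[k] c) ⊗ₜ[k] (j31 k A u * j24 k A v)
      = kp531 k A (Algebra.TensorProduct.assoc k k k A A A (u ⊗ₜ[k] b)) * kp246 k A (c ⊗ₜ[k] v) := by
  induction u using TensorProduct.induction_on with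
  | zero => simp [TensorProduct.zero_tmul, TensorProduct.tmul_zero]
  | tmul e f =>
    induction v using TensorProduct.induction_on with
    | zero => simp [TensorProduct.zero_tmul, TensorProduct.tmul_zero]
    | tmul g h => simp [kp531, kp246, TensorProduct.assoc_tmul]
    | add v1 v2 h1 h2 =>
      simp only [map_add, mul_add, add_mul, six_mul_add, six_add_mul, TensorProduct.add_tmul, TensorProduct.tmul_add, h1, h2]
  | add u1 u2 h1 h2 =>
    simp only [map_add, mul_add, add_mul, six_mul_add, six_add_mul, TensorProduct.add_tmul, TensorProduct.tmul_add, h1, h2]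

lemma L6 (p q : A ⊗[k] A) :
    copDL k A (j31 k A p * j24 k A q) = kp531 k A (copR k A p) * kp246 k A (copL k A q) := by
  induction p using TensorProduct.induction_on with
  | zero => simp
  | tmul a b =>
    induction q using TensorProduct.induction_on with
    | zero => simp
    | tmul c d =>
      have h1 : j31 k A (a ⊗ₜ[k] b) * j24 k A (c ⊗ₜ[k] d)
          = (b ⊗ₜ[k] c) ⊗ₜ[k] (a ⊗ₜ[k] d) := by simp
      have h2 : copR k A (a ⊗ₜ[k] b) = a ⊗ₜ[k] (cop k A b) := by simp [copR]
      have h3 : copL k A (c ⊗ₜ[k] d)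
          = Algebra.TensorProduct.assoc k k k A A A (cop k A c ⊗ₜ[k] d) := by simp [copL]
      rw [h1, h2, h3]
      have h4 : copDL k A ((b ⊗ₜ[k] c) ⊗ₜ[k] (a ⊗ₜ[k] d))
          = TensorProduct.assoc k (A ⊗[k] A) (A ⊗[k] A) (A ⊗[k] A)
              ((copD k A (b ⊗ₜ[k] c)) ⊗ₜ[k] (a ⊗ₜ[k] d)) := by
        simp [copDL]
      rw [h4, copD_tmul]
      exact S1L k A a d (cop k A b) (cop k A c)
    | add q1 q2 h1 h2 => simp only [map_add, mul_add, six_mul_add, h1, h2]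
  | add p1 p2 h1 h2 => simp only [map_add, add_mul, six_add_mul, h1, h2]

lemma L7 (p q : A ⊗[k] A) :
    copDR k A (j31 k A p * j24 k A q) = kp531 k A (copL k A p) * kp246 k A (copR k A q) := by
  induction p using TensorProduct.induction_on with
  | zero => simp
  | tmul a b =>
    induction q using TensorProduct.induction_on with
    | zero => simp
    | tmul c d =>
      have h1 : j31 k A (a ⊗ₜ[k] b) * j24 k A (c ⊗ₜ[k] d)
          = (b ⊗ₜ[k] c) ⊗ₜ[k] (a ⊗ₜ[k] d) := by simp
      have h2 : copR k A (c ⊗ₜ[k] d) = c ⊗ₜ[k] (cop k A d) := by simp [copR]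
      have h3 : copL k A (a ⊗ₜ[k] b)
          = Algebra.TensorProduct.assoc k k k A A A (cop k A a ⊗ₜ[k] b) := by simp [copL]
      rw [h1, h2, h3]
      have h4 : copDR k A ((b ⊗ₜ[k] c) ⊗ₜ[k] (a ⊗ₜ[k] d))
          = (b ⊗ₜ[k] c) ⊗ₜ[k] (copD k A (a ⊗ₜ[k] d)) := by
        simp [copDR]
      rw [h4, copD_tmul]
      exact S2L k A b c (cop k A a) (cop k A d)
    | add q1 q2 h1 h2 => simp only [map_add, mul_add, six_mul_add, h1, h2]
  | add p1 p2 h1 h2 => simp only [map_add, add_mul, six_add_mul, h1, h2]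

lemma copR_lin (v : A ⊗[k] A) :
    copR k A v = LinearMap.lTensor A ((cop k A).toLinearMap) v := by
  induction v using TensorProduct.induction_on with
  | zero => simp
  | tmul a b => simp [copR]
  | add v1 v2 h1 h2 => simp only [map_add, h1, h2]

lemma assocAlg_lin (w : A ⊗[k] A) (b : A) :
    Algebra.TensorProduct.assoc k k k A A A (w ⊗ₜ[k] b)
      = TensorProduct.assoc k A A A (w ⊗ₜ[k] b) := by
  induction w using TensorProduct.induction_on with
  | zero => simp [TensorProduct.zero_tmul]
  | tmul e f => simp [TensorProduct.assoc_tmul]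
  | add w1 w2 h1 h2 => simp only [TensorProduct.add_tmul, map_add, h1, h2]

lemma copL_lin (v : A ⊗[k] A) :
    copL k A v = TensorProduct.assoc k A A A
      (LinearMap.rTensor A ((cop k A).toLinearMap) v) := by
  induction v using TensorProduct.induction_on with
  | zero => simp
  | tmul a b =>
    have : copL k A (a ⊗ₜ[k] b)
        = Algebra.TensorProduct.assoc k k k A A A (cop k A a ⊗ₜ[k] b) := by simp [copL]
    rw [this, assocAlg_lin]
    simp
  | add v1 v2 h1 h2 => simp only [map_add, h1, h2]

lemma cop_comul (x : A) : cop k A x = Coalgebra.comul x := rfl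

lemma L9 (x : A) : copL k A (cop k A x) = copR k A (cop k A x) := by
  rw [copL_lin, copR_lin]
  have h : (cop k A).toLinearMap = (Coalgebra.comul : A →ₗ[k] A ⊗[k] A) := rfl
  rw [h, cop_comul]
  exact Coalgebra.coassoc_apply x

lemma coassocD (u : A ⊗[k] A) : copDL k A (copD k A u) = copDR k A (copD k A u) := by
  induction u using TensorProduct.induction_on with
  | zero => simp
  | tmul x y =>
    rw [copD_tmul, L6, L7, L9, L9]
  | add u1 u2 h1 h2 => simp only [map_add, h1, h2]

lemma copDL_rD (R : A ⊗[k] A) (hR : QTriangular k A R) :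
    copDL k A (rD k A R) =
      emb13 k (A ⊗[k] A) (rD k A R) * emb23 k (A ⊗[k] A) (rD k A R) := by
  rw [rD, L6, hR.coproduct_right, hR.coproduct_left]
  simp only [map_mul]
  rw [e531_13, e531_12, e246_13, e246_23, eS7, eS8, eS9, eS10]
  simp only [six_mul_assoc]
  rw [six_left_comm k A (ckp26_53 k A R R)]

lemma copDR_rD (R : A ⊗[k] A) (hR : QTriangular k A R) :
    copDR k A (rD k A R) =
      emb13 k (A ⊗[k] A) (rD k A R) * emb12 k (A ⊗[k] A) (rD k A R) := by
  rw [rD, L7, hR.coproduct_right, hR.coproduct_left]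
  simp only [map_mul]
  rw [e531_13, e531_23, e246_13, e246_12, eS7, eS8, eS11, eS12]
  simp only [six_mul_assoc]
  rw [six_left_comm k A (ckp26_31 k A R R)]

end Aux7
section Aux8
variable (k A : Type*) [CommSemiring k] [Semiring A] [Bialgebra k A]

open Algebra.TensorProduct

attribute [local simp] Algebra.TensorProduct.tmul_mul_tmul Algebra.TensorProduct.lift_tmul

lemma couD_tmul (b c : A) : couD k A (b ⊗ₜ[k] c) = cou k A b * cou k A c := by
  simp [couD, smul_eq_mul]

lemma couDL_j (p q : A ⊗[k] A) :
    couDL k A (j31 k A p * j24 k A q) =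
      (TensorProduct.rid k A (LinearMap.lTensor A (cou k A).toLinearMap p)) ⊗ₜ[k]
        (TensorProduct.lid k A (LinearMap.rTensor A (cou k A).toLinearMap q)) := by
  induction p using TensorProduct.induction_on with
  | zero => simp
  | tmul a b =>
    induction q using TensorProduct.induction_on with
    | zero => simp
    | tmul c d =>
      have h1 : j31 k A (a ⊗ₜ[k] b) * j24 k A (c ⊗ₜ[k] d)
          = (b ⊗ₜ[k] c) ⊗ₜ[k] (a ⊗ₜ[k] d) := by simp
      rw [h1]
      simp [couDL, couD_tmul, TensorProduct.smul_tmul', smul_smul, mul_comm]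
    | add q1 q2 h1 h2 =>
      simp only [map_add, mul_add, TensorProduct.tmul_add, h1, h2]
  | add p1 p2 h1 h2 =>
    simp only [map_add, add_mul, TensorProduct.add_tmul, h1, h2]

lemma couDR_j (p q : A ⊗[k] A) :
    couDR k A (j31 k A p * j24 k A q) =
      (TensorProduct.lid k A (LinearMap.rTensor A (cou k A).toLinearMap p)) ⊗ₜ[k]
        (TensorProduct.rid k A (LinearMap.lTensor A (cou k A).toLinearMap q)) := by
  induction p using TensorProduct.induction_on with
  | zero => simp
  | tmul a b =>
    induction q using TensorProduct.induction_on with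
    | zero => simp
    | tmul c d =>
      have h1 : j31 k A (a ⊗ₜ[k] b) * j24 k A (c ⊗ₜ[k] d)
          = (b ⊗ₜ[k] c) ⊗ₜ[k] (a ⊗ₜ[k] d) := by simp
      rw [h1]
      simp [couDR, couD_tmul, TensorProduct.smul_tmul', smul_smul, mul_comm]
    | add q1 q2 h1 h2 =>
      simp only [map_add, mul_add, TensorProduct.tmul_add, h1, h2]
  | add p1 p2 h1 h2 =>
    simp only [map_add, add_mul, TensorProduct.add_tmul, h1, h2]

lemma cou_lin : (cou k A).toLinearMap = (CoalgebraStruct.counit : A →ₗ[k] k) := rfl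
lemma cop_lin : (cop k A).toLinearMap = (CoalgebraStruct.comul : A →ₗ[k] A ⊗[k] A) := rfl

lemma couDL_copD (u : A ⊗[k] A) : couDL k A (copD k A u) = u := by
  induction u using TensorProduct.induction_on with
  | zero => simp
  | tmul x y =>
    rw [copD_tmul, couDL_j, cou_lin, cop_comul, cop_comul,
      Coalgebra.lTensor_counit_comul, Coalgebra.rTensor_counit_comul]
    simp
  | add u1 u2 h1 h2 => simp only [map_add, h1, h2]

lemma couDR_copD (u : A ⊗[k] A) : couDR k A (copD k A u) = u := by
  induction u using TensorProduct.induction_on with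
  | zero => simp
  | tmul x y =>
    rw [copD_tmul, couDR_j, cou_lin, cop_comul, cop_comul,
      Coalgebra.lTensor_counit_comul, Coalgebra.rTensor_counit_comul]
    simp
  | add u1 u2 h1 h2 => simp only [map_add, h1, h2]

end Aux8
section Aux9
variable (k A : Type*) [CommSemiring k] [Semiring A] [Bialgebra k A]

open Algebra.TensorProduct

attribute [local simp] Algebra.TensorProduct.tmul_mul_tmul Algebra.TensorProduct.lift_tmul

lemma STp (a b : A) (Q : A ⊗[k] A) :
    j31 k A (a ⊗ₜ[k] b) * j24 k A Q =
      TensorProduct.leftComm k A (A ⊗[k] A) A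
        (a ⊗ₜ[k] ((TensorProduct.assoc k A A A).symm (b ⊗ₜ[k] Q))) := by
  induction Q using TensorProduct.induction_on with
  | zero => simp
  | tmul q1 q2 => simp [TensorProduct.assoc_symm_tmul, TensorProduct.leftComm_tmul]
  | add Q1 Q2 h1 h2 =>
    simp only [map_add, mul_add, TensorProduct.tmul_add, h1, h2]

lemma STz (z : A ⊗[k] (A ⊗[k] A)) :
    lamF k A (LinearMap.lTensor (A ⊗[k] A) (cop k A).toLinearMap
        ((TensorProduct.assoc k A A A).symm z)) =
      TensorProduct.leftComm k A (A ⊗[k] A) A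
        (LinearMap.lTensor A ((TensorProduct.assoc k A A A).symm.toLinearMap ∘ₗ
          LinearMap.lTensor A (cop k A).toLinearMap) z) := by
  induction z using TensorProduct.induction_on with
  | zero => simp
  | tmul a w =>
    induction w using TensorProduct.induction_on with
    | zero => simp [TensorProduct.tmul_zero]
    | tmul b c =>
      simp only [TensorProduct.assoc_symm_tmul, LinearMap.lTensor_tmul, LinearMap.coe_comp,
        Function.comp_apply, AlgHom.toLinearMap_apply, LinearEquiv.coe_coe, lamF,
        Algebra.TensorProduct.lift_tmul]
      exact STp k A a b (cop k A c)
    | add w1 w2 h1 h2 =>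
      simp only [TensorProduct.tmul_add, map_add, h1, h2]
  | add z1 z2 h1 h2 => simp only [map_add, h1, h2]

lemma mcop_lin (v : A ⊗[k] (A ⊗[k] A)) :
    mcop k A v = LinearMap.rTensor (A ⊗[k] A) (cop k A).toLinearMap v := by
  induction v using TensorProduct.induction_on with
  | zero => simp
  | tmul a w => simp [mcop]
  | add v1 v2 h1 h2 => simp only [map_add, h1, h2]

lemma key10 (x : A) :
    copD k A (cop k A x) =
      TensorProduct.leftComm k A (A ⊗[k] A) A
        (LinearMap.lTensor A (LinearMap.rTensor A (cop k A).toLinearMap)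
          (LinearMap.lTensor A (cop k A).toLinearMap (cop k A x))) := by
  rw [copD_eq_lam, copR_lin, mcop_lin]
  rw [← LinearMap.comp_apply, LinearMap.rTensor_comp_lTensor,
    ← LinearMap.lTensor_comp_rTensor, LinearMap.comp_apply]
  have hcs : LinearMap.rTensor A (cop k A).toLinearMap (cop k A x)
      = (TensorProduct.assoc k A A A).symm
          (LinearMap.lTensor A (cop k A).toLinearMap (cop k A x)) := by
    rw [cop_lin, cop_comul]
    exact (Coalgebra.coassoc_symm_apply x).symm
  rw [hcs, STz]
  congr 1
  rw [← LinearMap.lTensor_comp_apply, ← LinearMap.lTensor_comp_apply]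
  have hW : ((TensorProduct.assoc k A A A).symm.toLinearMap ∘ₗ
        LinearMap.lTensor A (cop k A).toLinearMap) ∘ₗ (cop k A).toLinearMap
      = LinearMap.rTensor A (cop k A).toLinearMap ∘ₗ (cop k A).toLinearMap := by
    rw [LinearMap.comp_assoc, cop_lin]
    exact Coalgebra.coassoc_symm
  rw [hW]

lemma mem10 (x : A) :
    copD k A (cop k A x) ∈ sub2 k (A ⊗[k] A) (cop k A).range := by
  rw [key10]
  generalize (LinearMap.lTensor A (cop k A).toLinearMap (cop k A x)) = v
  induction v using TensorProduct.induction_on with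
  | zero => simpa using Submodule.zero_mem _
  | tmul a w =>
    rw [LinearMap.lTensor_tmul]
    induction w using TensorProduct.induction_on with
    | zero => simpa using Submodule.zero_mem _
    | tmul b c =>
      rw [LinearMap.rTensor_tmul, TensorProduct.leftComm_tmul]
      exact Submodule.subset_span ⟨cop k A b, ⟨b, rfl⟩, a ⊗ₜ[k] c, rfl⟩
    | add w1 w2 h1 h2 =>
      rw [map_add, TensorProduct.tmul_add, map_add]
      exact Submodule.add_mem _ h1 h2
  | add v1 v2 h1 h2 =>
    rw [map_add, map_add]
    exact Submodule.add_mem _ h1 h2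

end Aux9
/-- For a quasitriangular bialgebra `A`, the algebra
`D = A^{cop} ⊗ A` with coproduct `Δ_D = (2 3) ∘ (Δ^op ⊗ Δ)`, counit `ε ⊗ ε` and
R-matrix `R_D = R₃₁ · R₂₄` is a quasitriangular bialgebra, `Δ(A) ⊆ D` is a right
coideal subalgebra, and `(ψ, J, K) = ((1 2), 1 ⊗ 1, R)` is a cylindrical structure
on `(D, Δ(A))` (the *diagonal* cylindrical structure). -/
theorem diagonal_cylindrical_structure
    {k A : Type*} [Field k] [Ring A] [Bialgebra k A]
    (R : A ⊗[k] A) (hR : QTriangular k A R) :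
    -- D = A^{cop} ⊗ A is a bialgebra
    (copD k A 1 = 1) ∧
    (∀ u v : A ⊗[k] A, copD k A (u * v) = copD k A u * copD k A v) ∧
    (∀ u : A ⊗[k] A, copDL k A (copD k A u) = copDR k A (copD k A u)) ∧
    (∀ u : A ⊗[k] A, couDL k A (copD k A u) = u) ∧
    (∀ u : A ⊗[k] A, couDR k A (copD k A u) = u) ∧
    -- R_D = R₃₁·R₂₄ is an invertible universal R-matrix for D
    (IsUnit (rD k A R)) ∧
    (∀ u : A ⊗[k] A, rD k A R * copD k A u =
      flip2 k (A ⊗[k] A) (copD k A u) * rD k A R) ∧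
    (copDL k A (rD k A R) =
      emb13 k (A ⊗[k] A) (rD k A R) * emb23 k (A ⊗[k] A) (rD k A R)) ∧
    (copDR k A (rD k A R) =
      emb13 k (A ⊗[k] A) (rD k A R) * emb12 k (A ⊗[k] A) (rD k A R)) ∧
    -- Δ(A) is a right coideal subalgebra of D
    (∀ x : A, copD k A (cop k A x) ∈ sub2 k (A ⊗[k] A) (cop k A).range) ∧
    -- ((1 2), 1 ⊗ 1, R) is a cylindrical structure on (D, Δ(A)):
    -- (i) ((1 2), 1 ⊗ 1) is a twist pair: D^{cop, (1 2)} = D as quasitriangular bialgebras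
    (∀ u : A ⊗[k] A,
      psiBoth k (A ⊗[k] A) (flip2 k A)
        (flip2 k (A ⊗[k] A) (copD k A ((flip2 k A).symm u))) = copD k A u) ∧
    (psiBoth k (A ⊗[k] A) (flip2 k A) (flip2 k (A ⊗[k] A) (rD k A R)) = rD k A R) ∧
    -- (ii) the intertwining identity `R · Δ(x) = (1 2)(Δ(x)) · R` for `x ∈ A`
    (∀ x : A, R * cop k A x = flip2 k A (cop k A x) * R) ∧
    -- (iii) the coproduct identity `Δ_D(R) = (1 ⊗ R) · R_D^ψ · (R ⊗ 1)`
    (copD k A R =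
      ((1 : A ⊗[k] A) ⊗ₜ[k] R) * psiL k (A ⊗[k] A) (flip2 k A) (rD k A R) *
        (R ⊗ₜ[k] (1 : A ⊗[k] A))) := by
  refine ⟨copD_one k A, copD_mul k A, coassocD k A, couDL_copD k A, couDR_copD k A,
    (hR.isUnit.map (j31 k A)).mul (hR.isUnit.map (j24 k A)),
    rD_intertwine k A R hR, copDL_rD k A R hR, copDR_rD k A R hR,
    mem10 k A, psiBoth_flipF_copD k A, psiBoth_flipF_rD k A R,
    fun x => hR.intertwine x, thm_iii k A R hR⟩
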